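/- arXiv:2504.19721 — 2 statements merged into one kernel-verified Lean document; each statement's English description precedes it below -/
import Mathlib

section
/- The second differential of φ(v) = Σ_{n=1}^∞ cos(n v_n)/n⁴ at v = 0 is given by d²φ(0)[w,z] = -Σ_{n=1}^∞ w_n z_n / n², and the associated operator ℓ² → ℓ², w ↦ (-w_n/n²)_n, is injective. -/
set_option maxHeartbeats 1000000


noncomputable section StmtTwo

private abbrev E2 := lp (fun _ : ℕ => ℝ) 2

/-- evaluation functional on ℓ² -/
private def ev (n : ℕ) : E2 →L[ℝ] ℝ :=
  LinearMap.mkContinuous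
    { toFun := fun w => w n
      map_add' := fun w z => by simp [lp.coeFn_add]
      map_smul' := fun c w => by simp [lp.coeFn_smul] }
    1 (fun w => by show ‖w n‖ ≤ 1 * ‖w‖; simpa using lp.norm_apply_le_norm two_ne_zero w n)

private lemma ev_apply (n : ℕ) (w : E2) : ev n w = w n := rfl

private lemma norm_ev_le (n : ℕ) : ‖ev n‖ ≤ 1 :=
  LinearMap.mkContinuous_norm_le _ zero_le_one _

private lemma summable_aux (p : ℕ) (hp : 2 ≤ p) :
    Summable (fun n : ℕ => 1 / ((n : ℝ) + 1) ^ p) := by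
  have base : Summable (fun n : ℕ => 1 / (n : ℝ) ^ p) :=
    Real.summable_one_div_nat_pow.mpr hp
  exact ((summable_nat_add_iff 1).mpr base).congr fun n => by push_cast; ring

/-- first-level termwise derivative -/
private def f1 (n : ℕ) (v : E2) : E2 →L[ℝ] ℝ :=
  (-Real.sin (((n : ℝ) + 1) * v n) / ((n : ℝ) + 1) ^ 3) • ev n

/-- second-level termwise derivative -/
private def f2 (n : ℕ) (v : E2) : E2 →L[ℝ] (E2 →L[ℝ] ℝ) :=
  ((1 : ℝ →L[ℝ] ℝ).smulRight
    ((-Real.cos (((n : ℝ) + 1) * v n) / ((n : ℝ) + 1) ^ 2) • ev n)).comp (ev n)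

private lemma qpos (n : ℕ) : (0 : ℝ) < (n : ℝ) + 1 := by positivity

private lemma hasF1 (n : ℕ) (v : E2) :
    HasFDerivAt (fun v : E2 => Real.cos (((n : ℝ) + 1) * v n) / ((n : ℝ) + 1) ^ 4)
      (f1 n v) v := by
  have hq : ((n : ℝ) + 1) ≠ 0 := (qpos n).ne'
  have h0 : HasDerivAt (fun x : ℝ => ((n : ℝ) + 1) * x) ((n : ℝ) + 1) (v n) := by
    simpa using (hasDerivAt_id (v n)).const_mul ((n : ℝ) + 1)
  have h1 : HasDerivAt (fun x : ℝ => Real.cos (((n : ℝ) + 1) * x))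
      (-Real.sin (((n : ℝ) + 1) * v n) * ((n : ℝ) + 1)) (v n) :=
    (Real.hasDerivAt_cos (((n : ℝ) + 1) * v n)).comp (v n) h0
  have h2 : HasDerivAt (fun x : ℝ => Real.cos (((n : ℝ) + 1) * x) / ((n : ℝ) + 1) ^ 4)
      (-Real.sin (((n : ℝ) + 1) * v n) / ((n : ℝ) + 1) ^ 3) (v n) := by
    have := h1.div_const (((n : ℝ) + 1) ^ 4)
    refine this.congr_deriv ?_
    field_simp
  exact h2.comp_hasFDerivAt v (ev n).hasFDerivAt

private lemma hasF2 (n : ℕ) (v : E2) : HasFDerivAt (f1 n) (f2 n v) v := by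
  have hq : ((n : ℝ) + 1) ≠ 0 := (qpos n).ne'
  have h0 : HasDerivAt (fun x : ℝ => ((n : ℝ) + 1) * x) ((n : ℝ) + 1) (v n) := by
    simpa using (hasDerivAt_id (v n)).const_mul ((n : ℝ) + 1)
  have h1 : HasDerivAt (fun x : ℝ => Real.sin (((n : ℝ) + 1) * x))
      (Real.cos (((n : ℝ) + 1) * v n) * ((n : ℝ) + 1)) (v n) :=
    (Real.hasDerivAt_sin (((n : ℝ) + 1) * v n)).comp (v n) h0
  have h2 : HasDerivAt (fun x : ℝ => -Real.sin (((n : ℝ) + 1) * x) / ((n : ℝ) + 1) ^ 3)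
      (-Real.cos (((n : ℝ) + 1) * v n) / ((n : ℝ) + 1) ^ 2) (v n) := by
    have := (h1.neg).div_const (((n : ℝ) + 1) ^ 3)
    refine this.congr_deriv ?_
    field_simp
  have h3 : HasDerivAt (fun x : ℝ => (-Real.sin (((n : ℝ) + 1) * x) / ((n : ℝ) + 1) ^ 3) • ev n)
      ((-Real.cos (((n : ℝ) + 1) * v n) / ((n : ℝ) + 1) ^ 2) • ev n) (v n) := by
    simpa using h2.smul_const (ev n)
  exact h3.hasFDerivAt.comp v (ev n).hasFDerivAt

private lemma abs_scalar1 (n : ℕ) (v : E2) :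
    ‖-Real.sin (((n : ℝ) + 1) * v n) / ((n : ℝ) + 1) ^ 3‖ ≤ 1 / ((n : ℝ) + 1) ^ 3 := by
  rw [Real.norm_eq_abs, abs_div, abs_neg, abs_of_pos (pow_pos (qpos n) 3)]
  gcongr
  exact Real.abs_sin_le_one _

private lemma abs_scalar2 (n : ℕ) (v : E2) :
    ‖-Real.cos (((n : ℝ) + 1) * v n) / ((n : ℝ) + 1) ^ 2‖ ≤ 1 / ((n : ℝ) + 1) ^ 2 := by
  rw [Real.norm_eq_abs, abs_div, abs_neg, abs_of_pos (pow_pos (qpos n) 2)]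
  gcongr
  exact Real.abs_cos_le_one _

private lemma norm_f1_le (n : ℕ) (v : E2) : ‖f1 n v‖ ≤ 1 / ((n : ℝ) + 1) ^ 3 := by
  rw [f1]
  rw [norm_smul (-Real.sin (((n : ℝ) + 1) * v n) / ((n : ℝ) + 1) ^ 3) (ev n)]
  calc ‖-Real.sin (((n : ℝ) + 1) * v n) / ((n : ℝ) + 1) ^ 3‖ * ‖ev n‖
      ≤ (1 / ((n : ℝ) + 1) ^ 3) * 1 :=
        mul_le_mul (abs_scalar1 n v) (norm_ev_le n) (norm_nonneg _) (by positivity)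
    _ = 1 / ((n : ℝ) + 1) ^ 3 := mul_one _

private lemma norm_f2_le (n : ℕ) (v : E2) : ‖f2 n v‖ ≤ 1 / ((n : ℝ) + 1) ^ 2 := by
  rw [f2]
  refine le_trans (ContinuousLinearMap.opNorm_comp_le _ _) ?_
  rw [ContinuousLinearMap.norm_smulRight_apply, norm_one, one_mul,
    norm_smul (-Real.cos (((n : ℝ) + 1) * v n) / ((n : ℝ) + 1) ^ 2) (ev n)]
  calc ‖-Real.cos (((n : ℝ) + 1) * v n) / ((n : ℝ) + 1) ^ 2‖ * ‖ev n‖ * ‖ev n‖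
      ≤ (1 / ((n : ℝ) + 1) ^ 2) * 1 * 1 := by
        apply mul_le_mul ?_ (norm_ev_le n) (norm_nonneg _) (by positivity)
        exact mul_le_mul (abs_scalar2 n v) (norm_ev_le n) (norm_nonneg _) (by positivity)
    _ = 1 / ((n : ℝ) + 1) ^ 2 := by ring

private lemma key1 (v : E2) :
    HasFDerivAt
      (fun v : E2 => ∑' n : ℕ, Real.cos (((n : ℝ) + 1) * v n) / ((n : ℝ) + 1) ^ 4)
      (∑' n : ℕ, f1 n v) v := by
  apply hasFDerivAt_tsum (summable_aux 3 (by norm_num)) hasF1 (fun n x => norm_f1_le n x)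
    (x₀ := (0 : E2)) ?_ v
  apply Summable.of_norm_bounded (summable_aux 4 (by norm_num))
  intro n
  rw [Real.norm_eq_abs, abs_div, abs_of_pos (pow_pos (qpos n) 4)]
  gcongr
  exact Real.abs_cos_le_one _

private lemma key2 :
    HasFDerivAt (fun v : E2 => ∑' n : ℕ, f1 n v) (∑' n : ℕ, f2 n 0) 0 := by
  apply hasFDerivAt_tsum (summable_aux 2 (by norm_num)) hasF2 (fun n x => norm_f2_le n x)
    (x₀ := (0 : E2)) ?_ 0
  exact Summable.of_norm_bounded (summable_aux 3 (by norm_num)) (fun n => norm_f1_le n 0)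

private lemma sumf1 (v : E2) : Summable (fun n : ℕ => f1 n v) :=
  Summable.of_norm_bounded (summable_aux 3 (by norm_num)) (fun n => norm_f1_le n v)

/-- derivative of `v ↦ f1 n v z` -/
private def d2 (z : E2) (n : ℕ) (x : E2) : E2 →L[ℝ] ℝ :=
  ((-Real.cos (((n : ℝ) + 1) * x n) / ((n : ℝ) + 1) ^ 2) * z n) • ev n

private lemma hasD2 (z : E2) (n : ℕ) (x : E2) :
    HasFDerivAt (fun v : E2 => f1 n v z) (d2 z n x) x := by
  have hq : ((n : ℝ) + 1) ≠ 0 := (qpos n).ne'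
  have h0 : HasDerivAt (fun t : ℝ => ((n : ℝ) + 1) * t) ((n : ℝ) + 1) (x n) := by
    simpa using (hasDerivAt_id (x n)).const_mul ((n : ℝ) + 1)
  have h1 : HasDerivAt (fun t : ℝ => Real.sin (((n : ℝ) + 1) * t))
      (Real.cos (((n : ℝ) + 1) * x n) * ((n : ℝ) + 1)) (x n) :=
    (Real.hasDerivAt_sin (((n : ℝ) + 1) * x n)).comp (x n) h0
  have h2 : HasDerivAt (fun t : ℝ => -Real.sin (((n : ℝ) + 1) * t) / ((n : ℝ) + 1) ^ 3 * z n)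
      ((-Real.cos (((n : ℝ) + 1) * x n) / ((n : ℝ) + 1) ^ 2) * z n) (x n) := by
    have := (h1.neg.div_const (((n : ℝ) + 1) ^ 3)).mul_const (z n)
    refine this.congr_deriv ?_
    field_simp
  exact h2.comp_hasFDerivAt x (ev n).hasFDerivAt

private lemma norm_d2_le (z : E2) (n : ℕ) (x : E2) :
    ‖d2 z n x‖ ≤ ‖z‖ * (1 / ((n : ℝ) + 1) ^ 2) := by
  rw [d2]
  rw [norm_smul ((-Real.cos (((n : ℝ) + 1) * x n) / ((n : ℝ) + 1) ^ 2) * z n) (ev n)]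
  have hzn : ‖(z : ∀ _ : ℕ, ℝ) n‖ ≤ ‖z‖ := lp.norm_apply_le_norm two_ne_zero z n
  calc ‖(-Real.cos (((n : ℝ) + 1) * x n) / ((n : ℝ) + 1) ^ 2) * z n‖ * ‖ev n‖
      ≤ (1 / ((n : ℝ) + 1) ^ 2 * ‖z‖) * 1 := by
        apply mul_le_mul ?_ (norm_ev_le n) (norm_nonneg _) (by positivity)
        rw [norm_mul]
        exact mul_le_mul (abs_scalar2 n x) hzn (norm_nonneg _) (by positivity)
    _ = ‖z‖ * (1 / ((n : ℝ) + 1) ^ 2) := by ring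

private lemma sumd2 (z : E2) (x : E2) : Summable (fun n : ℕ => d2 z n x) :=
  Summable.of_norm_bounded ((summable_aux 2 (by norm_num)).mul_left ‖z‖)
    (fun n => norm_d2_le z n x)

/-- scalar-level second derivative identification -/
private lemma keyEq (z : E2) :
    (ContinuousLinearMap.apply ℝ ℝ z).comp (∑' n : ℕ, f2 n 0) = ∑' n : ℕ, d2 z n 0 := by
  have h1 : HasFDerivAt (fun v : E2 => (ContinuousLinearMap.apply ℝ ℝ z) (∑' n : ℕ, f1 n v))
      ((ContinuousLinearMap.apply ℝ ℝ z).comp (∑' n : ℕ, f2 n 0)) 0 :=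
    (ContinuousLinearMap.apply ℝ ℝ z).hasFDerivAt.comp 0 key2
  have hfun : (fun v : E2 => (ContinuousLinearMap.apply ℝ ℝ z) (∑' n : ℕ, f1 n v))
      = fun v : E2 => ∑' n : ℕ, f1 n v z := by
    funext v
    simpa using (ContinuousLinearMap.apply ℝ ℝ z).map_tsum (sumf1 v)
  rw [hfun] at h1
  have h2 : HasFDerivAt (fun v : E2 => ∑' n : ℕ, f1 n v z) (∑' n : ℕ, d2 z n 0) 0 := by
    apply hasFDerivAt_tsum ((summable_aux 2 (by norm_num)).mul_left ‖z‖) (hasD2 z)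
      (fun n x => norm_d2_le z n x) (x₀ := (0 : E2)) ?_ 0
    apply Summable.of_norm_bounded ((summable_aux 3 (by norm_num)).mul_left ‖z‖)
    intro n
    calc ‖f1 n 0 z‖ ≤ ‖f1 n 0‖ * ‖z‖ := (f1 n 0).le_opNorm z
      _ ≤ 1 / ((n : ℝ) + 1) ^ 3 * ‖z‖ :=
          mul_le_mul_of_nonneg_right (norm_f1_le n 0) (norm_nonneg _)
      _ = ‖z‖ * (1 / ((n : ℝ) + 1) ^ 3) := by ring
  exact h1.unique h2

end StmtTwo

theorem stmt_2 :
    (∀ w z : lp (fun _ : ℕ => ℝ) 2,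
      iteratedFDeriv ℝ 2
        (fun v : lp (fun _ : ℕ => ℝ) 2 =>
          ∑' n : ℕ, Real.cos (((n : ℝ) + 1) * v n) / ((n : ℝ) + 1) ^ 4)
        0 ![w, z]
        = -∑' n : ℕ, w n * z n / ((n : ℝ) + 1) ^ 2) ∧
    Function.Injective
      (fun (w : lp (fun _ : ℕ => ℝ) 2) (n : ℕ) => -(w n) / ((n : ℝ) + 1) ^ 2) := by
  constructor
  · intro w z
    rw [iteratedFDeriv_two_apply]
    have hfd : (fderiv ℝ (fun v : E2 =>
        ∑' n : ℕ, Real.cos (((n : ℝ) + 1) * v n) / ((n : ℝ) + 1) ^ 4))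
        = fun v : E2 => ∑' n : ℕ, f1 n v := funext fun v => (key1 v).fderiv
    rw [hfd, key2.fderiv]
    simp only [Matrix.cons_val_zero, Matrix.cons_val_one, Matrix.head_cons]
    have hBz : (∑' n : ℕ, f2 n 0) w z
        = ((ContinuousLinearMap.apply ℝ ℝ z).comp (∑' n : ℕ, f2 n 0)) w := rfl
    rw [hBz, keyEq z]
    have hw : (∑' n : ℕ, d2 z n 0) w = ∑' n : ℕ, d2 z n 0 w := by
      simpa using (ContinuousLinearMap.apply ℝ ℝ w).map_tsum (sumd2 z 0)
    rw [hw]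
    have hterm : ∀ n : ℕ, d2 z n 0 w = -(w n * z n / ((n : ℝ) + 1) ^ 2) := by
      intro n
      have h0 : ((0 : E2) : ∀ _ : ℕ, ℝ) n = (0 : ℝ) := by rw [lp.coeFn_zero]; rfl
      simp [d2, ev_apply, h0, Real.cos_zero]
      ring
    calc (∑' n : ℕ, d2 z n 0 w) = ∑' n : ℕ, -(w n * z n / ((n : ℝ) + 1) ^ 2) :=
          tsum_congr hterm
      _ = -∑' n : ℕ, w n * z n / ((n : ℝ) + 1) ^ 2 := tsum_neg
  · intro w z h
    apply lp.ext
    funext n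
    have hn := congrFun h n
    simp only at hn
    have hq : ((n : ℝ) + 1) ^ 2 ≠ 0 := pow_ne_zero 2 (qpos n).ne'
    field_simp at hn
    linarith
end

section
/- The point 0 is not isolated in the critical set of φ(v) = Σ_{n=1}^∞ cos(n v_n)/n⁴ on ℓ²(ℕ): for every ε > 0 there exists a critical point v ≠ 0 of φ with ‖v‖_{ℓ²} < ε. -/
open Real Filter Asymptotics
set_option maxHeartbeats 1000000

private lemma cos_diff_bound (a h : ℝ) (ha : Real.sin a = 0) :
    |Real.cos (a + h) - Real.cos a| ≤ h ^ 2 / 2 := by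
  have heq : Real.cos (a + h) - Real.cos a = Real.cos a * (Real.cos h - 1) := by
    rw [Real.cos_add, ha]; ring
  rw [heq, abs_mul]
  have h1 : |Real.cos a| ≤ 1 := Real.abs_cos_le_one a
  have h2 : |Real.cos h - 1| ≤ h ^ 2 / 2 := by
    rw [abs_sub_comm, abs_of_nonneg (by linarith [Real.cos_le_one h])]
    linarith [Real.one_sub_sq_div_two_le_cos (x := h)]
  calc |Real.cos a| * |Real.cos h - 1| ≤ 1 * (h ^ 2 / 2) :=
        mul_le_mul h1 h2 (abs_nonneg _) zero_le_one
    _ = h ^ 2 / 2 := one_mul _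

private lemma sq_summable (f : lp (fun _ : ℕ => ℝ) 2) :
    Summable (fun n => (f n) ^ 2) := by
  have hp : 0 < (2 : ENNReal).toReal := by norm_num
  have h := (memℓp_gen_iff hp).mp (lp.memℓp f)
  have : ∀ n : ℕ, ‖f n‖ ^ (2 : ENNReal).toReal = (f n) ^ 2 := by
    intro n
    rw [ENNReal.toReal_ofNat, show ((2:ℝ)) = ((2:ℕ):ℝ) by norm_num,
      Real.rpow_natCast, Real.norm_eq_abs, sq_abs]
  exact h.congr this

private lemma sq_tsum_eq (f : lp (fun _ : ℕ => ℝ) 2) :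
    ∑' n, (f n) ^ 2 = ‖f‖ ^ 2 := by
  have hp : 0 < (2 : ENNReal).toReal := by norm_num
  have h := lp.norm_rpow_eq_tsum hp f
  have e : ∀ x : ℝ, x ^ (2 : ENNReal).toReal = x ^ 2 := by
    intro x
    rw [ENNReal.toReal_ofNat, show ((2:ℝ)) = ((2:ℕ):ℝ) by norm_num, Real.rpow_natCast]
  rw [e] at h
  simp only [e, Real.norm_eq_abs, sq_abs] at h
  exact h.symm

private lemma inv_pow_summable : Summable (fun n : ℕ => 1 / ((n : ℝ) + 1) ^ 4) := by
  have h : Summable (fun n : ℕ => 1 / (n : ℝ) ^ 4) :=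
    summable_one_div_nat_pow.mpr (by norm_num)
  have := (summable_nat_add_iff 1).mpr h
  refine this.congr fun n => ?_
  push_cast
  ring_nf

private lemma cos_term_summable (x : lp (fun _ : ℕ => ℝ) 2) :
    Summable (fun n : ℕ => Real.cos (((n : ℝ) + 1) * x n) / ((n : ℝ) + 1) ^ 4) := by
  apply Summable.of_norm
  refine Summable.of_nonneg_of_le (fun n => norm_nonneg _) (fun n => ?_) inv_pow_summable
  rw [Real.norm_eq_abs, abs_div, abs_of_nonneg (by positivity : (0:ℝ) ≤ ((n:ℝ)+1)^4)]
  exact div_le_div_of_nonneg_right (Real.abs_cos_le_one _) (by positivity)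

private lemma main_deriv (v : lp (fun _ : ℕ => ℝ) 2)
    (hv : ∀ n : ℕ, Real.sin (((n : ℝ) + 1) * v n) = 0) :
    HasFDerivAt
      (fun x : lp (fun _ : ℕ => ℝ) 2 =>
        ∑' n : ℕ, Real.cos (((n : ℝ) + 1) * x n) / ((n : ℝ) + 1) ^ 4)
      (0 : lp (fun _ : ℕ => ℝ) 2 →L[ℝ] ℝ) v := by
  have key : ∀ w : lp (fun _ : ℕ => ℝ) 2,
      ‖(∑' n : ℕ, Real.cos (((n : ℝ) + 1) * (v + w) n) / ((n : ℝ) + 1) ^ 4) -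
        (∑' n : ℕ, Real.cos (((n : ℝ) + 1) * v n) / ((n : ℝ) + 1) ^ 4)‖
        ≤ ‖w‖ ^ 2 / 2 := by
    intro w
    set t : ℕ → ℝ := fun n =>
      Real.cos (((n : ℝ) + 1) * (v + w) n) / ((n : ℝ) + 1) ^ 4 -
      Real.cos (((n : ℝ) + 1) * v n) / ((n : ℝ) + 1) ^ 4 with ht
    have hterm : ∀ n : ℕ, |t n| ≤ (w n) ^ 2 / 2 := by
      intro n
      have hcoe : (v + w) n = v n + w n := by
        rw [lp.coeFn_add]; rfl
      have heq : ((n : ℝ) + 1) * (v + w) n = ((n:ℝ)+1) * v n + ((n:ℝ)+1) * w n := by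
        rw [hcoe]; ring
      have hb := cos_diff_bound (((n:ℝ)+1) * v n) (((n:ℝ)+1) * w n) (hv n)
      rw [← heq] at hb
      have hpos : (0:ℝ) < ((n:ℝ)+1) ^ 4 := by positivity
      have h1 : |t n| = |Real.cos (((n : ℝ) + 1) * (v + w) n) -
          Real.cos (((n : ℝ) + 1) * v n)| / ((n:ℝ)+1) ^ 4 := by
        rw [ht]
        simp only [div_sub_div_same, abs_div, abs_of_pos hpos]
      rw [h1]
      have h2 : |Real.cos (((n : ℝ) + 1) * (v + w) n) -
          Real.cos (((n : ℝ) + 1) * v n)| / ((n:ℝ)+1) ^ 4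
          ≤ ((((n:ℝ)+1) * w n) ^ 2 / 2) / ((n:ℝ)+1) ^ 4 := by
        exact div_le_div_of_nonneg_right hb hpos.le
      refine h2.trans ?_
      have h3 : ((((n:ℝ)+1) * w n) ^ 2 / 2) / ((n:ℝ)+1) ^ 4
          = (w n) ^ 2 / 2 / ((n:ℝ)+1) ^ 2 := by
        field_simp
      rw [h3]
      have : (1:ℝ) ≤ ((n:ℝ)+1)^2 := by nlinarith [Nat.cast_nonneg (α := ℝ) n]
      calc (w n) ^ 2 / 2 / ((n:ℝ)+1)^2 ≤ (w n) ^ 2 / 2 / 1 := by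
            apply div_le_div_of_nonneg_left (by positivity) one_pos this
        _ = (w n) ^ 2 / 2 := by ring
    have hts : Summable t := (cos_term_summable (v + w)).sub (cos_term_summable v)
    have hsum2 : Summable (fun n => (w n) ^ 2 / 2) := (sq_summable w).div_const 2
    have htsum : ∑' n, t n =
        (∑' n : ℕ, Real.cos (((n : ℝ) + 1) * (v + w) n) / ((n : ℝ) + 1) ^ 4) -
        (∑' n : ℕ, Real.cos (((n : ℝ) + 1) * v n) / ((n : ℝ) + 1) ^ 4) :=
      Summable.tsum_sub (cos_term_summable (v + w)) (cos_term_summable v)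
    rw [← htsum, Real.norm_eq_abs]
    have habs : Summable (fun n => |t n|) := hts.abs
    calc |∑' n, t n| ≤ ∑' n, |t n| := by
          have hnorm : Summable (fun n => ‖t n‖) := by
            simpa only [Real.norm_eq_abs] using habs
          simpa only [Real.norm_eq_abs] using norm_tsum_le_tsum_norm hnorm
      _ ≤ ∑' n, (w n) ^ 2 / 2 := Summable.tsum_le_tsum hterm habs hsum2
      _ = (∑' n, (w n) ^ 2) / 2 := by rw [tsum_div_const]
      _ = ‖w‖ ^ 2 / 2 := by rw [sq_tsum_eq]
  rw [hasFDerivAt_iff_isLittleO_nhds_zero]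
  simp only [ContinuousLinearMap.zero_apply, sub_zero]
  rw [isLittleO_iff]
  intro c hc
  filter_upwards [Metric.ball_mem_nhds 0 (by positivity : (0:ℝ) < 2 * c)] with w hw
  have hwn : ‖w‖ < 2 * c := by
    simpa [Metric.mem_ball, dist_zero_right] using hw
  refine (key w).trans ?_
  have h0 : (0:ℝ) ≤ ‖w‖ := norm_nonneg w
  nlinarith

/-- 0 is not isolated in the critical set of
φ(v) = Σ_{n≥1} cos(n v_n)/n⁴ on ℓ²(ℕ): for every ε > 0 there is a critical point
v ≠ 0 with ‖v‖ < ε.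
(ℓ² is indexed by `n : ℕ`, index `n` representing the paper's index `n+1 ≥ 1`.) -/
theorem stmt_3 :
    ∀ ε : ℝ, 0 < ε → ∃ v : lp (fun _ : ℕ => ℝ) 2, v ≠ 0 ∧ ‖v‖ < ε ∧
      fderiv ℝ
        (fun v : lp (fun _ : ℕ => ℝ) 2 =>
          ∑' n : ℕ, Real.cos (((n : ℝ) + 1) * v n) / ((n : ℝ) + 1) ^ 4)
        v = 0 := by
  intro ε hε
  obtain ⟨m, hm⟩ := exists_nat_gt (π / ε)
  have hm1 : (0:ℝ) < (m:ℝ) + 1 := by positivity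
  set a : ℝ := π / ((m:ℝ) + 1) with ha
  have hapos : 0 < a := by positivity
  refine ⟨lp.single 2 m a, ?_, ?_, ?_⟩
  · intro h
    have := congrArg (fun x : lp (fun _ : ℕ => ℝ) 2 => x m) h
    simp only [lp.single_apply_self (E := fun _ : ℕ => ℝ) 2 m a, lp.coeFn_zero,
      Pi.zero_apply] at this
    exact hapos.ne' this
  · have hnorm : ‖(lp.single 2 m a : lp (fun _ : ℕ => ℝ) 2)‖ = a := by
      have := lp.norm_single (E := fun _ : ℕ => ℝ) (by norm_num : (0:ENNReal) < 2)
        m a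
      rw [this, Real.norm_eq_abs, abs_of_pos hapos]
    rw [hnorm, ha, div_lt_iff₀ hm1]
    have : π / ε < (m:ℝ) + 1 := hm.trans (by linarith)
    calc π = ε * (π / ε) := by field_simp
      _ < ε * ((m:ℝ) + 1) := by
        exact mul_lt_mul_of_pos_left this hε
  · apply HasFDerivAt.fderiv
    apply main_deriv
    intro n
    rcases eq_or_ne n m with h | hnm
    · rw [h, lp.single_apply_self (E := fun _ : ℕ => ℝ) 2 m a, ha]
      rw [mul_div_cancel₀ _ hm1.ne']
      exact Real.sin_pi
    · rw [lp.single_apply_ne (E := fun _ : ℕ => ℝ) 2 m a hnm, mul_zero, Real.sin_zero]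
end
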